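/- For α ∈ (0,1), every eigenvalue of the k×k matrix P̃ = α η E⁻¹ G + α² E⁻¹ ZᵀZ (i.e., every complex root of its characteristic polynomial) is real and lies in the open interval (−1, 1). -/

import Mathlib

open Matrix

/-- For `α ∈ (0,1)`, every eigenvalue of the `k × k` matrix
`P̃ = αη E⁻¹G + α² E⁻¹ZᵀZ` (i.e. every complex root of its characteristic polynomial)
is real and lies in the open interval `(-1, 1)`. -/
theorem eigenvalues_Ptilde_real_mem_Ioo
    (n k : ℕ) (hn : 0 < n) (hk : 0 < k)
    (Z : Matrix (Fin n) (Fin k) ℝ)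
    (hZpos : ∀ i s, 0 < Z i s)
    (hZrow : ∀ i, ∑ s, Z i s = 1)
    (G : Matrix (Fin k) (Fin k) ℝ)
    (hGsym : Gᵀ = G)
    (hG01 : ∀ r s, G r s = 0 ∨ G r s = 1)
    (hGdiag : ∀ r, G r r = 0)
    (η : ℝ) (hη : 0 < η)
    (E : Matrix (Fin k) (Fin k) ℝ)
    (hE : E = Matrix.diagonal (fun s => (∑ i, Z i s) + η * ∑ r, G s r))
    (α : ℝ) (hα : α ∈ Set.Ioo (0 : ℝ) 1)
    (Pt : Matrix (Fin k) (Fin k) ℝ)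
    (hPt : Pt = (α * η) • (E⁻¹ * G) + α ^ 2 • (E⁻¹ * (Zᵀ * Z))) :
    ∀ μ : ℂ, ((Pt.map Complex.ofReal).charpoly).IsRoot μ →
      μ.im = 0 ∧ -1 < μ.re ∧ μ.re < 1 := by
  obtain ⟨hα0, hα1⟩ := hα
  haveI : Nonempty (Fin n) := ⟨⟨0, hn⟩⟩
  set d : Fin k → ℝ := fun s => (∑ i, Z i s) + η * ∑ r, G s r with hd_def
  have hGnn : ∀ r s, 0 ≤ G r s := by
    intro r s; rcases hG01 r s with h | h <;> rw [h] <;> norm_num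
  have hc : ∀ s, 0 < ∑ i, Z i s := fun s =>
    Finset.sum_pos (fun i _ => hZpos i s) Finset.univ_nonempty
  have hg : ∀ s, 0 ≤ ∑ r, G s r := fun s =>
    Finset.sum_nonneg (fun r _ => hGnn s r)
  have hd : ∀ s, 0 < d s := fun s =>
    add_pos_of_pos_of_nonneg (hc s) (mul_nonneg hη.le (hg s))
  -- E is invertible
  have hdetE : IsUnit E.det := by
    rw [hE, Matrix.det_diagonal]
    exact (Finset.prod_pos (fun s _ => hd s)).ne'.isUnit
  have hE1 : E * E⁻¹ = 1 := Matrix.mul_nonsing_inv E hdetE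
  -- key entrywise identity
  have hEPt : E * Pt = (α * η) • G + α ^ 2 • (Zᵀ * Z) := by
    rw [hPt, Matrix.mul_add, Matrix.mul_smul, Matrix.mul_smul,
      ← Matrix.mul_assoc, ← Matrix.mul_assoc, hE1, Matrix.one_mul, Matrix.one_mul]
  have key : ∀ s r, d s * Pt s r
      = α * η * G s r + α ^ 2 * ∑ i, Z i s * Z i r := by
    intro s r
    have h := congrFun (congrFun hEPt s) r
    rw [hE] at h
    rw [Matrix.diagonal_mul] at h
    simp only [Matrix.add_apply, Matrix.smul_apply, smul_eq_mul, Matrix.mul_apply,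
      Matrix.transpose_apply] at h
    exact h
  have hMnn : ∀ s r, 0 ≤ α * η * G s r + α ^ 2 * ∑ i, Z i s * Z i r := by
    intro s r
    have h1 : 0 ≤ ∑ i, Z i s * Z i r :=
      Finset.sum_nonneg fun i _ => mul_nonneg (hZpos i s).le (hZpos i r).le
    exact add_nonneg (mul_nonneg (mul_nonneg hα0.le hη.le) (hGnn s r))
      (mul_nonneg (sq_nonneg α) h1)
  have hPtnn : ∀ s r, 0 ≤ Pt s r := by
    intro s r
    have h := key s r
    nlinarith [hMnn s r, hd s]
  have hMsym : ∀ s r, (α * η * G s r + α ^ 2 * ∑ i, Z i s * Z i r)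
      = α * η * G r s + α ^ 2 * ∑ i, Z i r * Z i s := by
    intro s r
    have hG : G s r = G r s := by
      have := congrFun (congrFun hGsym r) s
      simpa using this
    rw [hG]
    congr 1
    rw [Finset.sum_congr rfl fun i _ => mul_comm (Z i s) (Z i r)]
  have hrowsum : ∀ s, ∑ r, Pt s r < 1 := by
    intro s
    have h1 : d s * ∑ r, Pt s r = α * η * (∑ r, G s r) + α ^ 2 * ∑ i, Z i s := by
      rw [Finset.mul_sum]
      rw [Finset.sum_congr rfl fun r _ => key s r]
      rw [Finset.sum_add_distrib, ← Finset.mul_sum, ← Finset.mul_sum]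
      congr 1
      rw [Finset.sum_comm]
      congr 1
      refine Finset.sum_congr rfl fun i _ => ?_
      rw [← Finset.mul_sum, hZrow i, mul_one]
    have h2 : d s * ∑ r, Pt s r < d s * 1 := by
      rw [h1, mul_one]
      have hds : d s = (∑ i, Z i s) + η * ∑ r, G s r := rfl
      rw [hds]
      have hgs := hg s
      have hcs := hc s
      nlinarith [mul_pos hcs (mul_pos (by linarith : (0:ℝ) < 1 - α)
          (by linarith : (0:ℝ) < 1 + α)),
        mul_nonneg (mul_nonneg hη.le hgs) (by linarith : (0:ℝ) ≤ 1 - α)]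
    exact lt_of_mul_lt_mul_left (by simpa using h2) (hd s).le
  -- now the complex eigenvalue argument
  intro μ hroot
  set A : Matrix (Fin k) (Fin k) ℂ := Pt.map Complex.ofReal with hA
  have hdet : (Matrix.diagonal (fun _ : Fin k => μ) - A).det = 0 := by
    have h1 : (Matrix.diagonal (fun _ : Fin k => μ) - A)
        = (Matrix.charmatrix A).map (Polynomial.evalRingHom μ) := by
      ext s r
      by_cases hsr : s = r
      · subst hsr
        simp [Matrix.charmatrix_apply_eq, Matrix.map_apply, Matrix.diagonal_apply_eq]
      · simp [Matrix.charmatrix_apply_ne _ _ _ hsr, Matrix.map_apply,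
          Matrix.diagonal_apply_ne _ hsr]
    have h2 := (Polynomial.evalRingHom μ).map_det A.charmatrix
    rw [RingHom.mapMatrix_apply] at h2
    rw [h1, ← h2]
    exact hroot
  obtain ⟨v, hv0, hv⟩ := Matrix.exists_mulVec_eq_zero_iff.mpr hdet
  have heig : ∀ s, ∑ r, A s r * v r = μ * v s := by
    intro s
    have h := congrFun hv s
    rw [Matrix.sub_mulVec] at h
    have h2 : (Matrix.diagonal (fun _ : Fin k => μ)).mulVec v s - A.mulVec v s = 0 := h
    rw [Matrix.mulVec_diagonal] at h2
    exact (sub_eq_zero.mp h2).symm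
  -- realness
  obtain ⟨t, hvt⟩ : ∃ t, v t ≠ 0 := Function.ne_iff.mp hv0
  have hS : (0 : ℝ) < ∑ s, d s * Complex.normSq (v s) := by
    refine Finset.sum_pos' (fun s _ => mul_nonneg (hd s).le (Complex.normSq_nonneg _)) ?_
    exact ⟨t, Finset.mem_univ t, mul_pos (hd t) (Complex.normSq_pos.mpr hvt)⟩
  have him : μ.im = 0 := by
    set T : ℂ := ∑ s, ∑ r, ((α * η * G s r + α ^ 2 * ∑ i, Z i s * Z i r : ℝ) : ℂ)
      * ((starRingEnd ℂ) (v s) * v r) with hT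
    have hmain : μ * ((∑ s, d s * Complex.normSq (v s) : ℝ) : ℂ) = T := by
      push_cast
      rw [Finset.mul_sum]
      rw [hT]
      refine Finset.sum_congr rfl fun s _ => ?_
      have h1 : ((Complex.normSq (v s) : ℝ) : ℂ) = (starRingEnd ℂ) (v s) * v s :=
        (Complex.normSq_eq_conj_mul_self).symm ▸ rfl
      calc μ * ((d s : ℂ) * ((Complex.normSq (v s) : ℝ) : ℂ))
          = (d s : ℂ) * (starRingEnd ℂ) (v s) * (μ * v s) := by rw [h1]; ring
        _ = (d s : ℂ) * (starRingEnd ℂ) (v s) * ∑ r, A s r * v r := by rw [heig s]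
        _ = ∑ r, ((d s * Pt s r : ℝ) : ℂ) * ((starRingEnd ℂ) (v s) * v r) := by
            rw [Finset.mul_sum]
            refine Finset.sum_congr rfl fun r _ => ?_
            simp only [hA, Matrix.map_apply]
            push_cast
            ring
        _ = ∑ r, ((α * η * G s r + α ^ 2 * ∑ i, Z i s * Z i r : ℝ) : ℂ)
              * ((starRingEnd ℂ) (v s) * v r) := by
            refine Finset.sum_congr rfl fun r _ => ?_
            rw [key s r]
    have hTreal : (starRingEnd ℂ) T = T := by
      rw [hT, map_sum]
      rw [Finset.sum_comm]
      refine Finset.sum_congr rfl fun s _ => ?_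
      rw [map_sum]
      refine Finset.sum_congr rfl fun r _ => ?_
      rw [_root_.map_mul, _root_.map_mul, Complex.conj_ofReal, Complex.conj_conj,
        hMsym s r]
      ring
    have hTim : T.im = 0 := by
      have := congrArg Complex.im hTreal
      simp only [Complex.conj_im] at this
      linarith
    have h := congrArg Complex.im hmain
    simp only [Complex.mul_im, Complex.ofReal_re, Complex.ofReal_im, mul_zero,
      zero_add, add_zero, hTim] at h
    exact (mul_eq_zero.mp h).resolve_right hS.ne'
  -- bound
  obtain ⟨s, _, hs⟩ := Finset.exists_max_image Finset.univ
    (fun r => ‖v r‖) ⟨t, Finset.mem_univ t⟩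
  have hvs : 0 < ‖v s‖ :=
    lt_of_lt_of_le (norm_pos_iff.mpr hvt) (hs t (Finset.mem_univ t))
  have hbound : ‖μ‖ * ‖v s‖ < 1 * ‖v s‖ := by
    rw [← norm_mul, ← heig s]
    calc ‖∑ r, A s r * v r‖
        ≤ ∑ r, ‖A s r * v r‖ := norm_sum_le _ _
      _ = ∑ r, Pt s r * ‖v r‖ := by
          refine Finset.sum_congr rfl fun r _ => ?_
          rw [norm_mul]
          simp only [hA, Matrix.map_apply, Complex.norm_real, Real.norm_eq_abs, abs_of_nonneg (hPtnn s r)]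
      _ ≤ ∑ r, Pt s r * ‖v s‖ :=
          Finset.sum_le_sum fun r _ =>
            mul_le_mul_of_nonneg_left (hs r (Finset.mem_univ r)) (hPtnn s r)
      _ = (∑ r, Pt s r) * ‖v s‖ := by rw [Finset.sum_mul]
      _ < 1 * ‖v s‖ :=
          mul_lt_mul_of_pos_right (hrowsum s) hvs
  have habs : ‖μ‖ < 1 := lt_of_mul_lt_mul_right hbound hvs.le
  have hre : |μ.re| < 1 := lt_of_le_of_lt (Complex.abs_re_le_norm μ) habs
  exact ⟨him, abs_lt.mp hre⟩
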